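/- Let C ∈ ℂ, C ≠ 0, and q = C · Π_{r=1}^{n} (X − α_r)^{k_r}. Fix j ∈ {1,…,n} and let P_j be the unique polynomial of degree < k_j with (X − α_j)^{k_j} ∣ P_j · Π_{r≠j} (X − α_r)^{k_r} − 1. Then for every ε > 0 with |α_i − α_j| > ε for all i ≠ j, the circle integral of z ↦ 1/q(z) over the circle of radius ε centered at α_j equals 2πi · C^{-1} · (coefficient of X^{k_j − 1} in P_j). (This is the residue computation of Main Example A: res_{z=α_j} 1/p′(z) = p^{(j)}_{k_j−1}/((m+1)(k_j−1)!), which shows the induced metric on a caustic of the A_m Frobenius manifold is Egoroff.) -/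

import Mathlib

open Polynomial

private lemma taylor_coeff_top {f : ℂ[X]} {m : ℕ} (h : f.natDegree ≤ m) (r : ℂ) :
    (Polynomial.taylor r f).coeff m = f.coeff m := by
  rw [Polynomial.taylor_coeff]
  have : Polynomial.hasseDeriv m f = C (f.coeff m) := by
    ext k
    rw [Polynomial.hasseDeriv_coeff]
    cases k with
    | zero => simp
    | succ k =>
        rw [Polynomial.coeff_eq_zero_of_natDegree_lt (by omega), Polynomial.coeff_C]
        simp
  rw [this, Polynomial.eval_C]

private lemma circleIntegral_finset_sum {ι : Type*} (s : Finset ι) {c : ℂ} {R : ℝ}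
    (f : ι → ℂ → ℂ) (h : ∀ i ∈ s, CircleIntegrable (f i) c R) :
    (∮ z in C(c, R), ∑ i ∈ s, f i z) = ∑ i ∈ s, ∮ z in C(c, R), f i z := by
  simp only [circleIntegral]
  rw [← intervalIntegral.integral_finset_sum (fun i hi => (h i hi).out)]
  simp only [deriv_circleMap, smul_eq_mul, Finset.mul_sum]

theorem residue_of_inv_polynomial_at_multiple_root
    {n : ℕ} (α : Fin n → ℂ) (hα : Function.Injective α)
    (k : Fin n → ℕ) (hk : ∀ i, 0 < k i)
    (c : ℂ) (hc : c ≠ 0)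
    (q : ℂ[X]) (hq : q = C c * ∏ r, (X - C (α r)) ^ (k r))
    (j : Fin n)
    (P : ℂ[X]) (hPdeg : P.degree < (k j : WithBot ℕ))
    (hPdvd : (X - C (α j)) ^ (k j) ∣
      (P * ∏ r ∈ Finset.univ.erase j, (X - C (α r)) ^ (k r) - 1))
    (ε : ℝ) (hε : 0 < ε)
    (hsep : ∀ i : Fin n, i ≠ j → ε < ‖α i - α j‖) :
    ∫ θ in (0 : ℝ)..(2 * Real.pi),
        (q.eval (α j + (ε : ℂ) * Complex.exp (θ * Complex.I)))⁻¹ *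
          (Complex.I * (ε : ℂ) * Complex.exp (θ * Complex.I))
      = 2 * Real.pi * Complex.I * c⁻¹ * P.coeff (k j - 1) := by
  classical
  set a : ℂ := α j with ha
  set m : ℕ := k j with hm
  set Q : ℂ[X] := ∏ r ∈ Finset.univ.erase j, (X - C (α r)) ^ (k r) with hQ
  obtain ⟨g, hg⟩ := hPdvd
  have hm0 : 0 < m := hk j
  have hPnd : P.natDegree < m := by
    rcases eq_or_ne P 0 with rfl | hP0
    · simpa using hm0
    · exact (Polynomial.natDegree_lt_iff_degree_lt hP0).mpr hPdeg
  -- roots other than a are outside the closed ball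
  have hQne : ∀ z ∈ Metric.closedBall a ε, Q.eval z ≠ 0 := by
    intro z hz
    rw [hQ, Polynomial.eval_prod]
    refine Finset.prod_ne_zero_iff.mpr fun r hr => ?_
    have hrj : r ≠ j := (Finset.mem_erase.mp hr).1
    have : z ≠ α r := by
      intro h
      have h1 : ‖α r - a‖ ≤ ε := by
        rw [← h]
        simpa [Complex.dist_eq] using hz
      exact absurd (hsep r hrj) (not_lt.mpr h1)
    simp only [Polynomial.eval_pow, Polynomial.eval_sub, Polynomial.eval_X, Polynomial.eval_C]
    exact pow_ne_zero _ (sub_ne_zero.mpr this)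
  have hsplit : (∏ r, (X - C (α r)) ^ (k r)) = (X - C a) ^ m * Q :=
    (Finset.mul_prod_erase Finset.univ _ (Finset.mem_univ j)).symm
  set f1 : ℂ → ℂ := fun z => c⁻¹ * (P.eval z * ((z - a) ^ m)⁻¹) with hf1
  set f2 : ℂ → ℂ := fun z => c⁻¹ * (g.eval z * (Q.eval z)⁻¹) with hf2
  -- Step A: the LHS is a circle integral
  have hA : (∫ θ in (0 : ℝ)..(2 * Real.pi),
        (q.eval (α j + (ε : ℂ) * Complex.exp (θ * Complex.I)))⁻¹ *
          (Complex.I * (ε : ℂ) * Complex.exp (θ * Complex.I)))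
      = ∮ z in C(a, ε), (q.eval z)⁻¹ := by
    simp only [circleIntegral, deriv_circleMap, circleMap, smul_eq_mul, zero_add, ha]
    congr 1; funext θ; ring
  rw [hA]
  -- pointwise identity on the sphere
  have hEq : Set.EqOn (fun z => (q.eval z)⁻¹) (fun z => f1 z - f2 z) (Metric.sphere a ε) := by
    intro z hz
    have habs : ‖z - a‖ = ε := by simpa [Complex.dist_eq] using hz
    have hz1 : z - a ≠ 0 := by
      intro h; rw [h, norm_zero] at habs; exact hε.ne habs
    have hz2 : Q.eval z ≠ 0 := hQne z (Metric.sphere_subset_closedBall hz)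
    have heval : P.eval z * Q.eval z - 1 = (z - a) ^ m * g.eval z := by
      have := congrArg (Polynomial.eval z) hg
      simpa using this
    have hqz : q.eval z = c * ((z - a) ^ m * Q.eval z) := by
      rw [hq, hsplit]; simp
    simp only [hf1, hf2, hqz]
    have hzm : (z - a) ^ m ≠ 0 := pow_ne_zero _ hz1
    have hQi : Q.eval z * (Q.eval z)⁻¹ = 1 := mul_inv_cancel₀ hz2
    have hAi : (z - a) ^ m * ((z - a) ^ m)⁻¹ = 1 := mul_inv_cancel₀ hzm
    linear_combination (-c⁻¹ * ((z - a) ^ m)⁻¹ * (Q.eval z)⁻¹) * heval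
      + c⁻¹ * P.eval z * ((z - a) ^ m)⁻¹ * hQi - c⁻¹ * g.eval z * (Q.eval z)⁻¹ * hAi
  rw [circleIntegral.integral_congr hε.le hEq]
  -- continuity facts
  have hcontP : ContinuousOn f1 (Metric.sphere a ε) := by
    apply ContinuousOn.mul continuousOn_const
    apply ContinuousOn.mul (Polynomial.continuous P).continuousOn
    apply ContinuousOn.inv₀ ((continuous_sub_right a).pow m).continuousOn
    intro z hz
    have habs : ‖z - a‖ = ε := by simpa [Complex.dist_eq] using hz
    refine pow_ne_zero _ fun h => hε.ne ?_
    have h' : z - a = 0 := h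
    rw [h', norm_zero] at habs; exact habs
  have hcontG : ContinuousOn f2 (Metric.closedBall a ε) := by
    apply ContinuousOn.mul continuousOn_const
    exact ((Polynomial.continuous g).continuousOn).mul
      (((Polynomial.continuous Q).continuousOn).inv₀ hQne)
  have hint1 : CircleIntegrable f1 a ε := hcontP.circleIntegrable hε.le
  have hint2 : CircleIntegrable f2 a ε :=
    (hcontG.mono Metric.sphere_subset_closedBall).circleIntegrable hε.le
  rw [circleIntegral.integral_sub hint1 hint2]
  -- the second integral vanishes
  have hI2 : (∮ z in C(a, ε), f2 z) = 0 := by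
    apply Complex.circleIntegral_eq_zero_of_differentiable_on_off_countable hε.le
      Set.countable_empty hcontG
    intro z hz
    exact (((g.differentiableAt).mul
      ((Q.differentiableAt).inv (hQne z (Metric.ball_subset_closedBall hz.1)))).const_mul _)
  rw [hI2, sub_zero]
  -- expand P in powers of (z - a)
  have hPsum : ∀ z : ℂ, P.eval z =
      ∑ i ∈ Finset.range m, (Polynomial.taylor a P).coeff i * (z - a) ^ i := by
    intro z
    have h1 : (Polynomial.taylor a P).eval (z - a) = P.eval z := Polynomial.taylor_eval_sub a P z
    rw [← h1, Polynomial.eval_eq_sum_range' (by rwa [Polynomial.natDegree_taylor])]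
  have hEq2 : Set.EqOn f1
      (fun z => ∑ i ∈ Finset.range m,
        (c⁻¹ * (Polynomial.taylor a P).coeff i) * (z - a) ^ ((i : ℤ) - m))
      (Metric.sphere a ε) := by
    intro z hz
    have habs : ‖z - a‖ = ε := by simpa [Complex.dist_eq] using hz
    have hz1 : z - a ≠ 0 := by
      intro h; rw [h, norm_zero] at habs; exact hε.ne habs
    simp only [hf1, hPsum z, Finset.sum_mul, Finset.mul_sum]
    refine Finset.sum_congr rfl fun i hi => ?_
    rw [zpow_sub₀ hz1, zpow_natCast, zpow_natCast, div_eq_mul_inv]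
    ring
  rw [circleIntegral.integral_congr hε.le hEq2]
  have hanot : a ∉ Metric.sphere a |ε| := by
    simp only [Metric.mem_sphere, dist_self, abs_of_pos hε]
    exact hε.ne
  have hintterm : ∀ i ∈ Finset.range m, CircleIntegrable
      (fun z => (c⁻¹ * (Polynomial.taylor a P).coeff i) * (z - a) ^ ((i : ℤ) - m)) a ε := by
    intro i _
    have h0 : CircleIntegrable (fun z => (z - a) ^ ((i : ℤ) - m)) a ε :=
      circleIntegrable_sub_zpow_iff.mpr (Or.inr (Or.inr hanot))
    exact IntervalIntegrable.const_mul h0 _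
  rw [circleIntegral_finset_sum _ _ hintterm]
  have hterm : ∀ i ∈ Finset.range m,
      (∮ z in C(a, ε), (c⁻¹ * (Polynomial.taylor a P).coeff i) * (z - a) ^ ((i : ℤ) - m))
      = if i = m - 1 then c⁻¹ * (Polynomial.taylor a P).coeff i * (2 * Real.pi * Complex.I)
        else 0 := by
    intro i hi
    rw [circleIntegral.integral_const_mul]
    by_cases h : i = m - 1
    · have : ((i : ℤ) - m) = -1 := by subst h; omega
      rw [this, if_pos h]
      have : (∮ z in C(a, ε), (z - a) ^ (-1 : ℤ)) = ∮ z in C(a, ε), (z - a)⁻¹ := by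
        apply circleIntegral.integral_congr hε.le
        intro z _; simp [zpow_neg_one]
      rw [this, circleIntegral.integral_sub_inv_of_mem_ball (Metric.mem_ball_self hε)]
    · have hne : ((i : ℤ) - m) ≠ -1 := by
        have : i < m := Finset.mem_range.mp hi
        omega
      rw [circleIntegral.integral_sub_zpow_of_ne hne, if_neg h, mul_zero]
  rw [Finset.sum_congr rfl hterm, Finset.sum_ite_eq' (Finset.range m) (m - 1)]
  rw [if_pos (Finset.mem_range.mpr (by omega))]
  rw [taylor_coeff_top (by omega) a]
  ring
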